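/- Assume the setting and hypotheses of the preceding Lemma A.7 bound, and in addition that 𝕏 and 𝕌 are convex, C_i : ℝᵐ → ℝ is convex on 𝕌, J : ℝⁿ → ℝ is convex on 𝕏, and for every x ∈ 𝕏ᵈ there exists u ∈ 𝕌 with f_s(x) + Bu ∈ D. Define T J₀(x) := min { C_i(u) + γ · Σ_{w∈W} p(w) · J(f_s(x) + Bu + w) : u ∈ 𝕌, f_s(x) + Bu ∈ D }. Then for every x ∈ 𝕏ᵈ, | Ê(x) − T J₀(x) | ≤ γ·e_e + e_d, where e_d := e_u + e_v + e_x + e_y + e_z. Equivalently, with T̂ᵈ Jᵈ(x) := C_s(x) + Ê(x) and T J(x) := C_s(x) + T J₀(x), one has max_{x∈𝕏ᵈ} |T̂ᵈ Jᵈ(x) − T J(x)| ≤ γ·e_e + e_d. -/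

import Mathlib

open scoped RealInnerProductSpace

/-- The conjugate of `h` over the set `S`: `h^{*S}(y) = sup_{x ∈ S} (⟨x,y⟩ − h(x))`. -/
noncomputable def conjOn {k : ℕ} (S : Set (EuclideanSpace ℝ (Fin k)))
    (h : EuclideanSpace ℝ (Fin k) → ℝ) (y : EuclideanSpace ℝ (Fin k)) : ℝ :=
  sSup ((fun x => ⟪x, y⟫ - h x) '' S)

/-- One-sided Hausdorff distance from `S` to `T`: `d⃗(S,T) = sup_{s∈S} inf_{t∈T} ‖s − t‖`. -/
noncomputable def dOneSided {k : ℕ} (S T : Set (EuclideanSpace ℝ (Fin k))) : ℝ :=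
  sSup ((fun s => Metric.infDist s T) '' S)

open scoped Pointwise

namespace DCDPaux

variable {k : ℕ}

local notation "E" k => EuclideanSpace ℝ (Fin k)

/-- boundedness of the conjugate defining set -/
lemma bddAbove_conj {S : Set (E k)} {h : (E k) → ℝ} {R mlb : ℝ}
    (hR : ∀ x ∈ S, ‖x‖ ≤ R) (hlb : ∀ x ∈ S, mlb ≤ h x) (y : E k) :
    BddAbove ((fun x => ⟪x, y⟫ - h x) '' S) := by
  refine ⟨R * ‖y‖ - mlb, ?_⟩
  rintro r ⟨x, hx, rfl⟩
  have h1 : ⟪x, y⟫ ≤ ‖x‖ * ‖y‖ := real_inner_le_norm x y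
  have h2 : ‖x‖ * ‖y‖ ≤ R * ‖y‖ :=
    mul_le_mul_of_nonneg_right (hR x hx) (norm_nonneg y)
  have := hlb x hx
  simp only
  linarith

lemma le_conjOn {S : Set (E k)} {h : (E k) → ℝ} {y : E k}
    (hbdd : BddAbove ((fun x => ⟪x, y⟫ - h x) '' S)) {x : E k} (hx : x ∈ S) :
    ⟪x, y⟫ - h x ≤ conjOn S h y :=
  le_csSup hbdd ⟨x, hx, rfl⟩

lemma conjOn_le {S : Set (E k)} {h : (E k) → ℝ} {y : E k} {c : ℝ}
    (hne : S.Nonempty) (hc : ∀ x ∈ S, ⟪x, y⟫ - h x ≤ c) :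
    conjOn S h y ≤ c :=
  csSup_le (hne.image _) (by rintro r ⟨x, hx, rfl⟩; exact hc x hx)

/-- one-sided Lipschitz estimate for the conjugate -/
lemma conjOn_lip {S : Set (E k)} {h : (E k) → ℝ} {R : ℝ}
    (hne : S.Nonempty) (hR : ∀ x ∈ S, ‖x‖ ≤ R)
    {y y' : E k} (hbdd : BddAbove ((fun x => ⟪x, y'⟫ - h x) '' S)) :
    conjOn S h y ≤ conjOn S h y' + R * ‖y - y'‖ := by
  refine conjOn_le hne fun x hx => ?_
  have h1 : ⟪x, y⟫ - h x = (⟪x, y'⟫ - h x) + ⟪x, y - y'⟫ := by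
    rw [inner_sub_right]; ring
  have h2 : ⟪x, y - y'⟫ ≤ ‖x‖ * ‖y - y'‖ := real_inner_le_norm _ _
  have h3 : ‖x‖ * ‖y - y'‖ ≤ R * ‖y - y'‖ :=
    mul_le_mul_of_nonneg_right (hR x hx) (norm_nonneg _)
  have h4 := le_conjOn hbdd hx
  linarith

end DCDPaux

namespace DCDPaux2

/-- Strong duality via Hahn–Banach separation: if `c` is strictly below every feasible
value `Ci u + ε z` (with `z = v + B u`), then there is a dual vector `y` certifying it. -/
lemma strong_dual {n m : ℕ}
    (U : Set (EuclideanSpace ℝ (Fin m))) (hUne : U.Nonempty) (hUc : IsCompact U)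
    (hUconv : Convex ℝ U)
    (D : Set (EuclideanSpace ℝ (Fin n))) (hDne : D.Nonempty) (hDc : IsCompact D)
    (hDconv : Convex ℝ D)
    (Ci : EuclideanSpace ℝ (Fin m) → ℝ) (hCi : Continuous Ci)
    (hCiconv : ConvexOn ℝ U Ci)
    (ε : EuclideanSpace ℝ (Fin n) → ℝ) (hεconv : ConvexOn ℝ D ε)
    (hεcont : ContinuousOn ε D)
    (B : EuclideanSpace ℝ (Fin m) →L[ℝ] EuclideanSpace ℝ (Fin n))
    (v : EuclideanSpace ℝ (Fin n))
    (u₀ : EuclideanSpace ℝ (Fin m)) (hu₀ : u₀ ∈ U) (hz₀ : v + B u₀ ∈ D)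
    (c : ℝ) (hc : ∀ u ∈ U, v + B u ∈ D → c < Ci u + ε (v + B u)) :
    ∃ y : EuclideanSpace ℝ (Fin n), ∀ u ∈ U, ∀ z ∈ D,
      (-⟪B u, y⟫ - Ci u) + (⟪z, y⟫ - ε z) ≤ ⟪y, v⟫ - c := by
  classical
  set F := EuclideanSpace ℝ (Fin n) × ℝ
  set C : Set F := {q | ∃ u ∈ U, ∃ z ∈ D, q.1 = B u - z ∧ Ci u + ε z ≤ q.2} with hCdef
  -- convexity of C
  have hCconv : Convex ℝ C := by
    rintro q1 ⟨u1, hu1, z1, hz1, he1, hle1⟩ q2 ⟨u2, hu2, z2, hz2, he2, hle2⟩ a b ha hb hab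
    refine ⟨a • u1 + b • u2, hUconv hu1 hu2 ha hb hab,
      a • z1 + b • z2, hDconv hz1 hz2 ha hb hab, ?_, ?_⟩
    · have : (a • q1 + b • q2).1 = a • q1.1 + b • q2.1 := rfl
      rw [this, he1, he2, map_add, map_smul, map_smul]
      module
    · have hCiu := hCiconv.2 hu1 hu2 ha hb hab
      have hεz := hεconv.2 hz1 hz2 ha hb hab
      have h2 : (a • q1 + b • q2).2 = a * q1.2 + b * q2.2 := rfl
      rw [h2]
      simp only [smul_eq_mul] at hCiu hεz
      nlinarith [mul_le_mul_of_nonneg_left hle1 ha, mul_le_mul_of_nonneg_left hle2 hb]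
  -- closedness of C
  have hinter : ContinuousOn (fun p : EuclideanSpace ℝ (Fin m) × EuclideanSpace ℝ (Fin n) =>
      ((B p.1 - p.2, Ci p.1 + ε p.2) : F)) (U ×ˢ D) := by
    apply ContinuousOn.prodMk
    · exact ((B.continuous.comp continuous_fst).sub continuous_snd).continuousOn
    · exact ((hCi.comp continuous_fst).continuousOn).add
        (hεcont.comp continuousOn_snd (fun p hp => hp.2))
  have hKcomp : IsCompact ((fun p : EuclideanSpace ℝ (Fin m) × EuclideanSpace ℝ (Fin n) =>
      ((B p.1 - p.2, Ci p.1 + ε p.2) : F)) '' (U ×ˢ D)) :=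
    (hUc.prod hDc).image_of_continuousOn hinter
  have hCeq : C = ((fun p : EuclideanSpace ℝ (Fin m) × EuclideanSpace ℝ (Fin n) =>
      ((B p.1 - p.2, Ci p.1 + ε p.2) : F)) '' (U ×ˢ D)) + ({(0 : EuclideanSpace ℝ (Fin n))} ×ˢ Set.Ici (0:ℝ)) := by
    ext q
    constructor
    · rintro ⟨u, hu, z, hz, he, hle⟩
      refine Set.mem_add.2 ⟨(B u - z, Ci u + ε z), ⟨(u, z), ⟨hu, hz⟩, rfl⟩,
        (0, q.2 - (Ci u + ε z)), ⟨rfl, by simpa using hle⟩, ?_⟩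
      show (B u - z + 0, Ci u + ε z + (q.2 - (Ci u + ε z))) = q
      have h2 : Ci u + ε z + (q.2 - (Ci u + ε z)) = q.2 := by ring
      rw [add_zero, ← he, h2]
    · intro hq
      rcases Set.mem_add.1 hq with ⟨p, ⟨⟨u, z⟩, ⟨hu, hz⟩, rfl⟩, r, ⟨hr1, hr2⟩, hsum⟩
      refine ⟨u, hu, z, hz, ?_, ?_⟩
      · have : q.1 = (B u - z) + r.1 := by rw [← hsum]; rfl
        rw [this]
        have h0 : r.1 = 0 := hr1
        rw [h0]; simp
      · have : q.2 = (Ci u + ε z) + r.2 := by rw [← hsum]; rfl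
        rw [this]
        have : (0:ℝ) ≤ r.2 := hr2
        linarith
  have hCclosed : IsClosed C := by
    rw [hCeq]
    exact (isClosed_singleton.prod isClosed_Ici).add_left_of_isCompact hKcomp
  -- the point to separate
  set P : F := (-v, c) with hP
  have hPnot : P ∉ C := by
    rintro ⟨u, hu, z, hz, he, hle⟩
    have h1 : B u - z = -v := he.symm
    have h2 : B u = z + -v := by rwa [sub_eq_iff_eq_add'] at h1
    have hz' : z = v + B u := by rw [h2]; abel
    rw [hz'] at hz hle
    exact absurd hle (not_le.2 (hc u hu hz))
  obtain ⟨f, α, hfP, hfC⟩ := geometric_hahn_banach_point_closed hCconv hCclosed hPnot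
  -- decompose f
  set b : ℝ := f (0, 1) with hb
  have hdec : ∀ (x : EuclideanSpace ℝ (Fin n)) (t : ℝ), f (x, t) = f (x, 0) + t * b := by
    intro x t
    have h1 : ((x, t) : F) = (x, 0) + t • ((0 : EuclideanSpace ℝ (Fin n)), (1:ℝ)) := by
      ext <;> simp
    rw [h1, map_add, map_smul, smul_eq_mul]
  -- the base feasible point in C
  have hq₀ : ((B u₀ - (v + B u₀), Ci u₀ + ε (v + B u₀)) : F) ∈ C :=
    ⟨u₀, hu₀, v + B u₀, hz₀, rfl, le_refl _⟩
  have hq₀first : B u₀ - (v + B u₀) = -v := by abel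
  -- b ≥ 0
  have hbnn : 0 ≤ b := by
    by_contra hneg
    push_neg at hneg
    set q₀ : F := (B u₀ - (v + B u₀), Ci u₀ + ε (v + B u₀)) with hq₀def
    set s : ℝ := (α - 1 - f q₀) / b with hs
    have hfq₀ : α < f q₀ := hfC _ hq₀
    have hspos : 0 < s := div_pos_of_neg_of_neg (by linarith) hneg
    have hmem : (q₀ + (0, s)) ∈ C := by
      refine ⟨u₀, hu₀, v + B u₀, hz₀, ?_, ?_⟩
      · show q₀.1 + 0 = _; simp [hq₀def]
      · show _ ≤ q₀.2 + s; simp [hq₀def]; linarith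
    have := hfC _ hmem
    have hval : f (q₀ + (0, s)) = f q₀ + s * b := by
      rw [map_add]
      have : f ((0 : EuclideanSpace ℝ (Fin n)), s) = s * b := by
        have := hdec 0 s
        rw [this, show (((0 : EuclideanSpace ℝ (Fin n)), (0:ℝ)) : F) = 0 from rfl, map_zero, zero_add]
      rw [this]
    rw [hval] at this
    have : f q₀ + (α - 1 - f q₀) = f q₀ + s * b := by
      rw [hs, div_mul_cancel₀ _ (ne_of_lt hneg)]
    linarith
  -- b ≠ 0
  have hbne : b ≠ 0 := by
    intro h0
    set q₀ : F := (B u₀ - (v + B u₀), Ci u₀ + ε (v + B u₀)) with hq₀def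
    have hfq₀ : α < f q₀ := hfC _ hq₀
    have e1 : f q₀ = f (-v, 0) := by
      rw [hq₀def]
      rw [show ((B u₀ - (v + B u₀), Ci u₀ + ε (v + B u₀)) : F)
        = (-v, Ci u₀ + ε (v + B u₀)) by rw [hq₀first]]
      rw [hdec, h0, mul_zero, add_zero]
    have e2 : f P = f (-v, 0) := by
      rw [hP, hdec, h0, mul_zero, add_zero]
    rw [e1] at hfq₀
    rw [e2] at hfP
    linarith
  have hbpos : 0 < b := lt_of_le_of_ne hbnn (Ne.symm hbne)
  -- extract y
  set g : EuclideanSpace ℝ (Fin n) →L[ℝ] ℝ :=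
    (1/b) • (f.comp (ContinuousLinearMap.inl ℝ (EuclideanSpace ℝ (Fin n)) ℝ)) with hg
  set y : EuclideanSpace ℝ (Fin n) := (InnerProductSpace.toDual ℝ _).symm g with hy
  have hyx : ∀ x : EuclideanSpace ℝ (Fin n), ⟪y, x⟫ = (1/b) * f (x, 0) := by
    intro x
    rw [hy, InnerProductSpace.toDual_symm_apply, hg]
    have h0 : (ContinuousLinearMap.inl ℝ (EuclideanSpace ℝ (Fin n)) ℝ) x = (x, (0:ℝ)) :=
      ContinuousLinearMap.inl_apply x
    simp [ContinuousLinearMap.smul_apply, ContinuousLinearMap.comp_apply, h0]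
  refine ⟨y, fun u hu z hz => ?_⟩
  have hmem : ((B u - z, Ci u + ε z) : F) ∈ C := ⟨u, hu, z, hz, rfl, le_refl _⟩
  have h1 : α < f (B u - z, Ci u + ε z) := hfC _ hmem
  have h2 : f (B u - z, Ci u + ε z) = b * ⟪y, B u - z⟫ + (Ci u + ε z) * b := by
    rw [hdec, hyx]
    field_simp
  have h3 : f P = b * ⟪y, -v⟫ + c * b := by
    rw [hP, hdec, hyx]
    field_simp
  have key : ⟪y, -v⟫ + c < ⟪y, B u - z⟫ + (Ci u + ε z) := by
    have := hfP.trans h1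
    rw [h2, h3] at this
    nlinarith
  have e1 : ⟪y, B u - z⟫ = ⟪y, B u⟫ - ⟪y, z⟫ := inner_sub_right _ _ _
  have e2 : ⟪y, -v⟫ = -⟪y, v⟫ := inner_neg_right _ _
  have e3 : ⟪B u, y⟫ = ⟪y, B u⟫ := real_inner_comm _ _
  have e4 : ⟪z, y⟫ = ⟪y, z⟫ := real_inner_comm _ _
  rw [e1, e2] at key
  rw [e3, e4]
  linarith

end DCDPaux2

set_option maxHeartbeats 1200000 in
/-- Proposition A.8 (error of the d-CDP operation): under convexity the exact CDP operator
coincides with the Bellman (DP) operator, so the discrete conjugate DP output `Ê`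
approximates the discretized Bellman update within `γ·e_e + e_d`,
where `e_d = e_u + e_v + e_x + e_y + e_z`. -/
theorem dCDP_vs_Bellman_error {n m : ℕ}
    (X : Set (EuclideanSpace ℝ (Fin n))) (hXne : X.Nonempty) (hXc : IsCompact X)
    (hXconv : Convex ℝ X)
    (W : Finset (EuclideanSpace ℝ (Fin n))) (hWne : W.Nonempty)
    (p : EuclideanSpace ℝ (Fin n) → ℝ)
    (hp : ∀ w ∈ W, 0 ≤ p w) (hpsum : ∑ w ∈ W, p w = 1)
    (γ : ℝ) (hγ : 0 < γ)
    (D : Set (EuclideanSpace ℝ (Fin n)))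
    (hD : D = {z | ∀ w ∈ W, z + w ∈ X}) (hDne : D.Nonempty)
    (Xd XD : Finset (EuclideanSpace ℝ (Fin n))) (hXd : Xd.Nonempty)
    (hXD : (↑XD : Set (EuclideanSpace ℝ (Fin n))) = (↑Xd : Set (EuclideanSpace ℝ (Fin n))) ∩ D)
    (hXDne : XD.Nonempty)
    (U : Set (EuclideanSpace ℝ (Fin m))) (hUne : U.Nonempty) (hUc : IsCompact U)
    (hUconv : Convex ℝ U)
    (Ud : Finset (EuclideanSpace ℝ (Fin m))) (hUdne : Ud.Nonempty)
    (hUdsub : (↑Ud : Set (EuclideanSpace ℝ (Fin m))) ⊆ U)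
    (Ci : EuclideanSpace ℝ (Fin m) → ℝ) (hCi : Continuous Ci) (hCiconv : ConvexOn ℝ U Ci)
    (Ki : ℝ) (hKi : 0 ≤ Ki)
    (hCiLip : ∀ u ∈ U, ∀ u' ∈ U, |Ci u - Ci u'| ≤ Ki * ‖u - u'‖)
    (B : EuclideanSpace ℝ (Fin m) →L[ℝ] EuclideanSpace ℝ (Fin n))
    (J : EuclideanSpace ℝ (Fin n) → ℝ) (hJconv : ConvexOn ℝ X J)
    (K : ℝ) (hK : 0 ≤ K)
    (hJLip : ∀ x ∈ X, ∀ x' ∈ X, |J x - J x'| ≤ K * ‖x - x'‖)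
    (ε : EuclideanSpace ℝ (Fin n) → ℝ)
    (hε : ∀ z, ε z = γ * ∑ w ∈ W, p w * J (z + w))
    (e_e : ℝ) (hee : 0 ≤ e_e)
    (εt : EuclideanSpace ℝ (Fin n) → ℝ)
    (hεt : ∀ x ∈ XD, |ε x - εt x| ≤ γ * e_e)
    (Y : Finset (EuclideanSpace ℝ (Fin n))) (hYne : Y.Nonempty)
    (A : EuclideanSpace ℝ (Fin m) → ℝ) (e_v : ℝ) (hev : 0 ≤ e_v)
    (hA : ∀ y ∈ Y,
      0 ≤ A (-(ContinuousLinearMap.adjoint B) y) -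
          Ud.sup' hUdne (fun u => ⟪u, -(ContinuousLinearMap.adjoint B) y⟫ - Ci u) ∧
      A (-(ContinuousLinearMap.adjoint B) y) -
          Ud.sup' hUdne (fun u => ⟪u, -(ContinuousLinearMap.adjoint B) y⟫ - Ci u) ≤ e_v)
    (φ : EuclideanSpace ℝ (Fin n) → ℝ)
    (hφ : ∀ y, φ y = conjOn U Ci (-(ContinuousLinearMap.adjoint B) y) + conjOn D ε y)
    (ϕd : EuclideanSpace ℝ (Fin n) → ℝ)
    (hϕd : ∀ y, ϕd y =
      A (-(ContinuousLinearMap.adjoint B) y) + XD.sup' hXDne (fun x => ⟪x, y⟫ - εt x))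
    (fs : EuclideanSpace ℝ (Fin n) → EuclideanSpace ℝ (Fin n))
    (δ : ℝ) (hδ : 0 ≤ δ)
    (hatt : ∀ x ∈ Xd, ∃ yx : EuclideanSpace ℝ (Fin n),
      sSup (Set.range fun y => ⟪y, fs x⟫ - φ y) = ⟪yx, fs x⟫ - φ yx ∧
      Metric.infDist yx (↑Y : Set (EuclideanSpace ℝ (Fin n))) ≤ δ)
    (M e_u e_x e_y : ℝ)
    (hM : M = ‖B‖ * sSup ((fun u => ‖u‖) '' U) + sSup ((fun z => ‖z‖) '' D))
    (heu : e_u = (‖B‖ * Y.sup' hYne (fun y => ‖y‖) + Ki) *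
      dOneSided U (↑Ud : Set (EuclideanSpace ℝ (Fin m))))
    (hex : e_x = (Y.sup' hYne (fun y => ‖y‖) + γ * K) *
      dOneSided D (↑XD : Set (EuclideanSpace ℝ (Fin n))))
    (hey : e_y = (Xd.sup' hXd (fun x => ‖fs x‖) + M) * δ)
    (Ehat : EuclideanSpace ℝ (Fin n) → ℝ) (e_z : ℝ) (hez : 0 ≤ e_z)
    (hE : ∀ x ∈ Xd,
      0 ≤ Ehat x - Y.sup' hYne (fun y => ⟪y, fs x⟫ - ϕd y) ∧
      Ehat x - Y.sup' hYne (fun y => ⟪y, fs x⟫ - ϕd y) ≤ e_z)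
    (hfeas : ∀ x ∈ Xd, ∃ u ∈ U, fs x + B u ∈ D) :
    (∀ x ∈ Xd,
      |Ehat x -
          sInf {c : ℝ | ∃ u ∈ U, fs x + B u ∈ D ∧
            c = Ci u + γ * ∑ w ∈ W, p w * J (fs x + B u + w)}| ≤
        γ * e_e + (e_u + e_v + e_x + e_y + e_z)) ∧
    ∀ Cs : EuclideanSpace ℝ (Fin n) → ℝ,
      Xd.sup' hXd (fun x =>
          |(Cs x + Ehat x) -
            (Cs x + sInf {c : ℝ | ∃ u ∈ U, fs x + B u ∈ D ∧
              c = Ci u + γ * ∑ w ∈ W, p w * J (fs x + B u + w)})|) ≤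
        γ * e_e + (e_u + e_v + e_x + e_y + e_z) := by
  classical
  obtain ⟨w₀, hw₀⟩ := id hWne
  obtain ⟨uu, huu⟩ := id hUne
  obtain ⟨zz, hzz⟩ := id hDne
  obtain ⟨ud₀, hud₀⟩ := id hUdne
  obtain ⟨xd₀, hxd₀⟩ := id hXDne
  obtain ⟨y₀, hy₀⟩ := id hYne
  obtain ⟨RX, hRX⟩ := isBounded_iff_forall_norm_le.mp hXc.isBounded
  -- D is closed, bounded, compact, convex
  have hDclosed : IsClosed D := by
    rw [hD]
    have heq : {z : EuclideanSpace ℝ (Fin n) | ∀ w ∈ W, z + w ∈ X} =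
        ⋂ w ∈ W, (fun z => z + w) ⁻¹' X := by
      ext z; simp [Set.mem_iInter]
    rw [heq]
    exact isClosed_biInter (fun w _ => hXc.isClosed.preimage (continuous_add_right w))
  have hDbdd : ∀ z ∈ D, ‖z‖ ≤ RX + ‖w₀‖ := by
    intro z hz
    rw [hD] at hz
    have h1 := hRX _ (hz w₀ hw₀)
    have h2 : ‖z‖ ≤ ‖z + w₀‖ + ‖w₀‖ := by
      have := norm_sub_le (z + w₀) w₀
      simpa using this
    linarith
  have hDcomp : IsCompact D :=
    Metric.isCompact_of_isClosed_isBounded hDclosed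
      (isBounded_iff_forall_norm_le.mpr ⟨RX + ‖w₀‖, hDbdd⟩)
  have hDconv : Convex ℝ D := by
    intro z1 hz1 z2 hz2 a b ha hb hab
    rw [hD] at hz1 hz2 ⊢
    intro w hw
    have e : a • (z1 + w) + b • (z2 + w) = (a • z1 + b • z2) + (a + b) • w := by module
    rw [hab, one_smul] at e
    have : a • (z1 + w) + b • (z2 + w) ∈ X := hXconv (hz1 w hw) (hz2 w hw) ha hb hab
    rwa [e] at this
  have hKγ : (0:ℝ) ≤ γ * K := mul_nonneg hγ.le hK
  -- ε is Lipschitz on D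
  have εlip : ∀ z ∈ D, ∀ z' ∈ D, |ε z - ε z'| ≤ γ * K * ‖z - z'‖ := by
    intro z hz z' hz'
    rw [hε z, hε z', ← mul_sub, ← Finset.sum_sub_distrib, abs_mul, abs_of_pos hγ]
    have hb : ∀ w ∈ W, |p w * J (z + w) - p w * J (z' + w)| ≤ p w * (K * ‖z - z'‖) := by
      intro w hw
      rw [← mul_sub, abs_mul, abs_of_nonneg (hp w hw)]
      refine mul_le_mul_of_nonneg_left ?_ (hp w hw)
      have hzX : z + w ∈ X := by rw [hD] at hz; exact hz w hw
      have hzX' : z' + w ∈ X := by rw [hD] at hz'; exact hz' w hw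
      have := hJLip _ hzX _ hzX'
      simpa [show (z + w) - (z' + w) = z - z' from by abel] using this
    calc γ * |∑ w ∈ W, (p w * J (z + w) - p w * J (z' + w))|
        ≤ γ * ∑ w ∈ W, |p w * J (z + w) - p w * J (z' + w)| :=
          mul_le_mul_of_nonneg_left (Finset.abs_sum_le_sum_abs _ _) hγ.le
      _ ≤ γ * ∑ w ∈ W, p w * (K * ‖z - z'‖) :=
          mul_le_mul_of_nonneg_left (Finset.sum_le_sum hb) hγ.le
      _ = γ * K * ‖z - z'‖ := by rw [← Finset.sum_mul, hpsum]; ring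
  -- ε is convex on D
  have εconv : ConvexOn ℝ D ε := by
    refine ⟨hDconv, ?_⟩
    intro z1 hz1 z2 hz2 a b ha hb hab
    rw [hε, hε, hε]
    simp only [smul_eq_mul]
    have hterm : ∀ w ∈ W, p w * J ((a • z1 + b • z2) + w) ≤
        a * (p w * J (z1 + w)) + b * (p w * J (z2 + w)) := by
      intro w hw
      have h1 : z1 + w ∈ X := by rw [hD] at hz1; exact hz1 w hw
      have h2 : z2 + w ∈ X := by rw [hD] at hz2; exact hz2 w hw
      have hJ := hJconv.2 h1 h2 ha hb hab
      have e : a • (z1 + w) + b • (z2 + w) = (a • z1 + b • z2) + (a + b) • w := by module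
      rw [hab, one_smul] at e
      rw [e] at hJ
      simp only [smul_eq_mul] at hJ
      have := mul_le_mul_of_nonneg_left hJ (hp w hw)
      nlinarith
    calc γ * ∑ w ∈ W, p w * J ((a • z1 + b • z2) + w)
        ≤ γ * ∑ w ∈ W, (a * (p w * J (z1 + w)) + b * (p w * J (z2 + w))) :=
          mul_le_mul_of_nonneg_left (Finset.sum_le_sum hterm) hγ.le
      _ = a * (γ * ∑ w ∈ W, p w * J (z1 + w)) + b * (γ * ∑ w ∈ W, p w * J (z2 + w)) := by
          rw [Finset.sum_add_distrib, ← Finset.mul_sum, ← Finset.mul_sum]; ring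
  -- ε continuous on D
  have εcont : ContinuousOn ε D := by
    have hL : LipschitzOnWith (Real.toNNReal (γ * K)) ε D := by
      apply LipschitzOnWith.of_dist_le_mul
      intro z hz z' hz'
      rw [Real.coe_toNNReal _ hKγ, Real.dist_eq, dist_eq_norm]
      exact εlip z hz z' hz'
    exact hL.continuousOn
  -- norm bounds RU, RD
  set RU := sSup ((fun u : EuclideanSpace ℝ (Fin m) => ‖u‖) '' U) with hRUdef
  set RD := sSup ((fun z : EuclideanSpace ℝ (Fin n) => ‖z‖) '' D) with hRDdef
  obtain ⟨RU0, hRU0⟩ := isBounded_iff_forall_norm_le.mp hUc.isBounded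
  have hRUbdd : BddAbove ((fun u : EuclideanSpace ℝ (Fin m) => ‖u‖) '' U) :=
    ⟨RU0, by rintro r ⟨u, hu, rfl⟩; exact hRU0 u hu⟩
  have hRU : ∀ u ∈ U, ‖u‖ ≤ RU := fun u hu => le_csSup hRUbdd ⟨u, hu, rfl⟩
  have hRUnn : (0:ℝ) ≤ RU := (norm_nonneg uu).trans (hRU uu huu)
  have hRDbdd : BddAbove ((fun z : EuclideanSpace ℝ (Fin n) => ‖z‖) '' D) :=
    ⟨RX + ‖w₀‖, by rintro r ⟨z, hz, rfl⟩; exact hDbdd z hz⟩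
  have hRD : ∀ z ∈ D, ‖z‖ ≤ RD := fun z hz => le_csSup hRDbdd ⟨z, hz, rfl⟩
  have hRDnn : (0:ℝ) ≤ RD := (norm_nonneg zz).trans (hRD zz hzz)
  have hMnn : (0:ℝ) ≤ M := by
    rw [hM]
    exact add_nonneg (mul_nonneg (norm_nonneg _) hRUnn) hRDnn
  -- bounds below for Ci and ε
  obtain ⟨umin, huminU, hminOn⟩ := hUc.exists_isMinOn hUne hCi.continuousOn
  have hminle : ∀ u ∈ U, Ci umin ≤ Ci u := fun u hu => isMinOn_iff.mp hminOn u hu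
  have εlb : ∀ z ∈ D, ε zz - γ * K * (RD + ‖zz‖) ≤ ε z := by
    intro z hz
    have h1 := (abs_le.mp (εlip z hz zz hzz)).2
    have h2 : ‖z - zz‖ ≤ RD + ‖zz‖ := by
      have := norm_sub_le z zz
      have := hRD z hz
      linarith
    have h3 : γ * K * ‖z - zz‖ ≤ γ * K * (RD + ‖zz‖) :=
      mul_le_mul_of_nonneg_left h2 hKγ
    have h4 := (abs_le.mp (εlip zz hzz z hz)).2
    have h5 : ‖zz - z‖ = ‖z - zz‖ := norm_sub_rev _ _
    rw [h5] at h4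
    linarith
  -- BddAbove for conjugate sets
  have bddU : ∀ q, BddAbove ((fun u => ⟪u, q⟫ - Ci u) '' U) :=
    fun q => DCDPaux.bddAbove_conj hRU (fun u hu => hminle u hu) q
  have bddD : ∀ y, BddAbove ((fun z => ⟪z, y⟫ - ε z) '' D) :=
    fun y => DCDPaux.bddAbove_conj hRD εlb y
  -- adjoint facts
  have hadj : ∀ (y : EuclideanSpace ℝ (Fin n)) (u : EuclideanSpace ℝ (Fin m)),
      ⟪u, -(ContinuousLinearMap.adjoint B) y⟫ = -⟪B u, y⟫ := by
    intro y u
    have h1 : ⟪u, (ContinuousLinearMap.adjoint B) y⟫ = ⟪B u, y⟫ := by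
      rw [real_inner_comm, ContinuousLinearMap.adjoint_inner_left, real_inner_comm]
    rw [inner_neg_right, h1]
  have hadjnormle : ∀ y : EuclideanSpace ℝ (Fin n),
      ‖(ContinuousLinearMap.adjoint B) y‖ ≤ ‖B‖ * ‖y‖ := by
    intro y
    calc ‖(ContinuousLinearMap.adjoint B) y‖ ≤ ‖ContinuousLinearMap.adjoint B‖ * ‖y‖ :=
          (ContinuousLinearMap.adjoint B).le_opNorm y
      _ = ‖B‖ * ‖y‖ := by rw [ContinuousLinearMap.adjoint.norm_map B]
  -- φ Lipschitz with constant M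
  have φlip : ∀ y y', |φ y - φ y'| ≤ M * ‖y - y'‖ := by
    intro y y'
    rw [hφ, hφ]
    have hpp : ∀ a b : EuclideanSpace ℝ (Fin n),
        ‖(-(ContinuousLinearMap.adjoint B) a) - (-(ContinuousLinearMap.adjoint B) b)‖
          ≤ ‖B‖ * ‖a - b‖ := by
      intro a b
      have he : (-(ContinuousLinearMap.adjoint B) a) - (-(ContinuousLinearMap.adjoint B) b)
          = (ContinuousLinearMap.adjoint B) (b - a) := by
        rw [map_sub]; abel
      rw [he]
      calc ‖(ContinuousLinearMap.adjoint B) (b - a)‖ ≤ ‖B‖ * ‖b - a‖ := hadjnormle _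
        _ = ‖B‖ * ‖a - b‖ := by rw [norm_sub_rev]
    have hU1 : conjOn U Ci (-(ContinuousLinearMap.adjoint B) y) ≤
        conjOn U Ci (-(ContinuousLinearMap.adjoint B) y') +
          RU * ‖(-(ContinuousLinearMap.adjoint B) y) - (-(ContinuousLinearMap.adjoint B) y')‖ :=
      DCDPaux.conjOn_lip hUne hRU (bddU _)
    have hU2 : conjOn U Ci (-(ContinuousLinearMap.adjoint B) y') ≤
        conjOn U Ci (-(ContinuousLinearMap.adjoint B) y) +
          RU * ‖(-(ContinuousLinearMap.adjoint B) y') - (-(ContinuousLinearMap.adjoint B) y)‖ :=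
      DCDPaux.conjOn_lip hUne hRU (bddU _)
    have hD1 : conjOn D ε y ≤ conjOn D ε y' + RD * ‖y - y'‖ :=
      DCDPaux.conjOn_lip hDne hRD (bddD _)
    have hD2 : conjOn D ε y' ≤ conjOn D ε y + RD * ‖y' - y‖ :=
      DCDPaux.conjOn_lip hDne hRD (bddD _)
    have k1 : RU * ‖(-(ContinuousLinearMap.adjoint B) y) - (-(ContinuousLinearMap.adjoint B) y')‖
        ≤ RU * (‖B‖ * ‖y - y'‖) := mul_le_mul_of_nonneg_left (hpp y y') hRUnn
    have k2 : RU * ‖(-(ContinuousLinearMap.adjoint B) y') - (-(ContinuousLinearMap.adjoint B) y)‖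
        ≤ RU * (‖B‖ * ‖y' - y‖) := mul_le_mul_of_nonneg_left (hpp y' y) hRUnn
    have hyy : ‖y' - y‖ = ‖y - y'‖ := norm_sub_rev _ _
    rw [hyy] at hD2 k2
    have hMd : M * ‖y - y'‖ = RU * (‖B‖ * ‖y - y'‖) + RD * ‖y - y'‖ := by rw [hM]; ring
    rw [abs_sub_le_iff]
    constructor <;> linarith
  -- Y norm bound
  set maxY := Y.sup' hYne (fun y => ‖y‖) with hmaxYdef
  have hmaxY : ∀ y ∈ Y, ‖y‖ ≤ maxY := fun y hy => Finset.le_sup' _ hy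
  have hmaxYnn : (0:ℝ) ≤ maxY := (norm_nonneg y₀).trans (hmaxY y₀ hy₀)
  -- one-sided distances
  have hUdcne : (↑Ud : Set (EuclideanSpace ℝ (Fin m))).Nonempty := ⟨ud₀, Finset.mem_coe.mpr hud₀⟩
  have hXDcne : (↑XD : Set (EuclideanSpace ℝ (Fin n))).Nonempty := ⟨xd₀, Finset.mem_coe.mpr hxd₀⟩
  have hXDD : ∀ x' ∈ XD, (x' : EuclideanSpace ℝ (Fin n)) ∈ D := by
    intro x' hx'
    have : (x' : EuclideanSpace ℝ (Fin n)) ∈ (↑Xd : Set (EuclideanSpace ℝ (Fin n))) ∩ D := by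
      rw [← hXD]; exact Finset.mem_coe.mpr hx'
    exact this.2
  have bddinfU : BddAbove ((fun s => Metric.infDist s (↑Ud : Set (EuclideanSpace ℝ (Fin m)))) '' U) := by
    refine ⟨RU + ‖(ud₀ : EuclideanSpace ℝ (Fin m))‖, ?_⟩
    rintro r ⟨u, hu, rfl⟩
    calc Metric.infDist u (↑Ud : Set (EuclideanSpace ℝ (Fin m))) ≤ dist u ud₀ :=
          Metric.infDist_le_dist_of_mem (Finset.mem_coe.mpr hud₀)
      _ ≤ ‖u‖ + ‖(ud₀ : EuclideanSpace ℝ (Fin m))‖ := by rw [dist_eq_norm]; exact norm_sub_le _ _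
      _ ≤ RU + ‖(ud₀ : EuclideanSpace ℝ (Fin m))‖ := by have := hRU u hu; linarith
  have hdU : ∀ u ∈ U, Metric.infDist u (↑Ud : Set (EuclideanSpace ℝ (Fin m))) ≤
      dOneSided U (↑Ud : Set (EuclideanSpace ℝ (Fin m))) :=
    fun u hu => le_csSup bddinfU ⟨u, hu, rfl⟩
  have hdUnn : (0:ℝ) ≤ dOneSided U (↑Ud : Set (EuclideanSpace ℝ (Fin m))) :=
    Metric.infDist_nonneg.trans (hdU uu huu)
  have bddinfD : BddAbove ((fun s => Metric.infDist s (↑XD : Set (EuclideanSpace ℝ (Fin n)))) '' D) := by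
    refine ⟨RD + ‖(xd₀ : EuclideanSpace ℝ (Fin n))‖, ?_⟩
    rintro r ⟨z, hz, rfl⟩
    calc Metric.infDist z (↑XD : Set (EuclideanSpace ℝ (Fin n))) ≤ dist z xd₀ :=
          Metric.infDist_le_dist_of_mem (Finset.mem_coe.mpr hxd₀)
      _ ≤ ‖z‖ + ‖(xd₀ : EuclideanSpace ℝ (Fin n))‖ := by rw [dist_eq_norm]; exact norm_sub_le _ _
      _ ≤ RD + ‖(xd₀ : EuclideanSpace ℝ (Fin n))‖ := by have := hRD z hz; linarith
  have hdD : ∀ z ∈ D, Metric.infDist z (↑XD : Set (EuclideanSpace ℝ (Fin n))) ≤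
      dOneSided D (↑XD : Set (EuclideanSpace ℝ (Fin n))) :=
    fun z hz => le_csSup bddinfD ⟨z, hz, rfl⟩
  have hdDnn : (0:ℝ) ≤ dOneSided D (↑XD : Set (EuclideanSpace ℝ (Fin n))) :=
    Metric.infDist_nonneg.trans (hdD zz hzz)
  -- nonnegativity of the error terms
  have heunn : (0:ℝ) ≤ e_u := by
    rw [heu]
    exact mul_nonneg (add_nonneg (mul_nonneg (norm_nonneg _) hmaxYnn) hKi) hdUnn
  have hexnn : (0:ℝ) ≤ e_x := by
    rw [hex]
    exact mul_nonneg (add_nonneg hmaxYnn hKγ) hdDnn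
  set NX := Xd.sup' hXd (fun x => ‖fs x‖) with hNXdef
  obtain ⟨xx, hxx⟩ := id hXd
  have hNXnn : (0:ℝ) ≤ NX := by
    refine (norm_nonneg (fs xx)).trans ?_
    rw [hNXdef]
    exact Finset.le_sup' (fun x => ‖fs x‖) hxx
  have heynn : (0:ℝ) ≤ e_y := by
    rw [hey]
    exact mul_nonneg (add_nonneg hNXnn hMnn) hδ
  -- comparison of φ and ϕd on Y
  have hcomp : ∀ y ∈ Y, φ y - ϕd y ≤ e_u + (e_x + γ * e_e) ∧ ϕd y - φ y ≤ e_v + γ * e_e := by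
    intro y hy
    have hpnorm : ‖-(ContinuousLinearMap.adjoint B) y‖ ≤ ‖B‖ * maxY := by
      rw [norm_neg]
      calc ‖(ContinuousLinearMap.adjoint B) y‖ ≤ ‖B‖ * ‖y‖ := hadjnormle y
        _ ≤ ‖B‖ * maxY := mul_le_mul_of_nonneg_left (hmaxY y hy) (norm_nonneg B)
    obtain ⟨hA1, hA2⟩ := hA y hy
    -- U part
    have hsup_le_cU : Ud.sup' hUdne (fun u => ⟪u, -(ContinuousLinearMap.adjoint B) y⟫ - Ci u) ≤
        conjOn U Ci (-(ContinuousLinearMap.adjoint B) y) := by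
      refine Finset.sup'_le _ _ (fun u hu => ?_)
      exact DCDPaux.le_conjOn (bddU _) (hUdsub (Finset.mem_coe.mpr hu))
    have hcU_le : conjOn U Ci (-(ContinuousLinearMap.adjoint B) y) ≤
        Ud.sup' hUdne (fun u => ⟪u, -(ContinuousLinearMap.adjoint B) y⟫ - Ci u) + e_u := by
      refine DCDPaux.conjOn_le hUne (fun u hu => ?_)
      obtain ⟨u', hu', hdist⟩ :=
        (Ud.finite_toSet.isCompact).exists_infDist_eq_dist hUdcne u
      have hu'U : u' ∈ U := hUdsub hu'
      have hu'd : u' ∈ Ud := Finset.mem_coe.mp hu'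
      have h1 : ⟪u - u', -(ContinuousLinearMap.adjoint B) y⟫ ≤
          ‖u - u'‖ * ‖-(ContinuousLinearMap.adjoint B) y‖ := real_inner_le_norm _ _
      have h2 : Ci u' - Ci u ≤ Ki * ‖u' - u‖ :=
        (le_abs_self _).trans (hCiLip u' hu'U u hu)
      have h3 : ‖u - u'‖ ≤ dOneSided U (↑Ud : Set (EuclideanSpace ℝ (Fin m))) := by
        rw [show ‖u - u'‖ = dist u u' from (dist_eq_norm u u'), ← hdist]
        exact hdU u hu
      have h4 : ‖u' - u‖ = ‖u - u'‖ := norm_sub_rev _ _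
      have hsup : ⟪u', -(ContinuousLinearMap.adjoint B) y⟫ - Ci u' ≤
          Ud.sup' hUdne (fun u => ⟪u, -(ContinuousLinearMap.adjoint B) y⟫ - Ci u) :=
        Finset.le_sup' (fun u => ⟪u, -(ContinuousLinearMap.adjoint B) y⟫ - Ci u) hu'd
      have hinner : ⟪u, -(ContinuousLinearMap.adjoint B) y⟫ =
          ⟪u', -(ContinuousLinearMap.adjoint B) y⟫ + ⟪u - u', -(ContinuousLinearMap.adjoint B) y⟫ := by
        rw [← inner_add_left]
        congr 1
        abel
      have b1 : ‖u - u'‖ * ‖-(ContinuousLinearMap.adjoint B) y‖ ≤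
          dOneSided U (↑Ud : Set (EuclideanSpace ℝ (Fin m))) * (‖B‖ * maxY) :=
        mul_le_mul h3 hpnorm (norm_nonneg _) hdUnn
      have b2 : Ki * ‖u - u'‖ ≤ Ki * dOneSided U (↑Ud : Set (EuclideanSpace ℝ (Fin m))) :=
        mul_le_mul_of_nonneg_left h3 hKi
      have hcoef : e_u = dOneSided U (↑Ud : Set (EuclideanSpace ℝ (Fin m))) * (‖B‖ * maxY) +
          Ki * dOneSided U (↑Ud : Set (EuclideanSpace ℝ (Fin m))) := by
        rw [heu]; ring
      rw [h4] at h2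
      rw [hinner]
      linarith
    -- D part
    have hSX_le : XD.sup' hXDne (fun x => ⟪x, y⟫ - εt x) ≤ conjOn D ε y + γ * e_e := by
      refine Finset.sup'_le _ _ (fun x' hx' => ?_)
      have hx'D : (x' : EuclideanSpace ℝ (Fin n)) ∈ D := hXDD x' hx'
      have h1 : ε x' - εt x' ≤ γ * e_e := (le_abs_self _).trans (hεt x' hx')
      have h2 : ⟪x', y⟫ - ε x' ≤ conjOn D ε y := DCDPaux.le_conjOn (bddD _) hx'D
      linarith
    have hcD_le : conjOn D ε y ≤ XD.sup' hXDne (fun x => ⟪x, y⟫ - εt x) + (γ * e_e + e_x) := by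
      refine DCDPaux.conjOn_le hDne (fun z hz => ?_)
      obtain ⟨x', hx', hdist⟩ :=
        (XD.finite_toSet.isCompact).exists_infDist_eq_dist hXDcne z
      have hx'XD : x' ∈ XD := Finset.mem_coe.mp hx'
      have hx'D : (x' : EuclideanSpace ℝ (Fin n)) ∈ D := hXDD x' hx'XD
      have h1 : ⟪z - x', y⟫ ≤ ‖z - x'‖ * ‖y‖ := real_inner_le_norm _ _
      have h2 : ε x' - ε z ≤ γ * K * ‖x' - z‖ :=
        (le_abs_self _).trans (εlip x' hx'D z hz)
      have h3 : ‖z - x'‖ ≤ dOneSided D (↑XD : Set (EuclideanSpace ℝ (Fin n))) := by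
        rw [show ‖z - x'‖ = dist z x' from (dist_eq_norm z x'), ← hdist]
        exact hdD z hz
      have h4 : ‖x' - z‖ = ‖z - x'‖ := norm_sub_rev _ _
      have h5 : εt x' - ε x' ≤ γ * e_e := by
        have := (abs_le.mp (hεt x' hx'XD)).1
        linarith
      have hsup : ⟪x', y⟫ - εt x' ≤ XD.sup' hXDne (fun x => ⟪x, y⟫ - εt x) :=
        Finset.le_sup' (fun x => ⟪x, y⟫ - εt x) hx'XD
      have hinner : ⟪z, y⟫ = ⟪x', y⟫ + ⟪z - x', y⟫ := by
        rw [← inner_add_left]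
        congr 1
        abel
      have b1 : ‖z - x'‖ * ‖y‖ ≤ dOneSided D (↑XD : Set (EuclideanSpace ℝ (Fin n))) * maxY :=
        mul_le_mul h3 (hmaxY y hy) (norm_nonneg _) hdDnn
      have b2 : γ * K * ‖z - x'‖ ≤ γ * K * dOneSided D (↑XD : Set (EuclideanSpace ℝ (Fin n))) :=
        mul_le_mul_of_nonneg_left h3 hKγ
      have hcoef : e_x = dOneSided D (↑XD : Set (EuclideanSpace ℝ (Fin n))) * maxY +
          γ * K * dOneSided D (↑XD : Set (EuclideanSpace ℝ (Fin n))) := by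
        rw [hex]; ring
      rw [h4] at h2
      rw [hinner]
      linarith
    rw [hφ, hϕd]
    constructor <;> linarith
  -- the main per-point estimate
  have main : ∀ x ∈ Xd,
      |Ehat x -
          sInf {c : ℝ | ∃ u ∈ U, fs x + B u ∈ D ∧
            c = Ci u + γ * ∑ w ∈ W, p w * J (fs x + B u + w)}| ≤
        γ * e_e + (e_u + e_v + e_x + e_y + e_z) := by
    intro x hx
    set Tset : Set ℝ := {c : ℝ | ∃ u ∈ U, fs x + B u ∈ D ∧
        c = Ci u + γ * ∑ w ∈ W, p w * J (fs x + B u + w)} with hTsetdef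
    obtain ⟨uf, huf, hzf⟩ := hfeas x hx
    have hTmem : ∀ u ∈ U, fs x + B u ∈ D → Ci u + ε (fs x + B u) ∈ Tset :=
      fun u hu hz => ⟨u, hu, hz, by rw [hε]⟩
    have hTne : Tset.Nonempty := ⟨_, hTmem uf huf hzf⟩
    -- weak duality
    have wd : ∀ (y : EuclideanSpace ℝ (Fin n)) (u : EuclideanSpace ℝ (Fin m)),
        u ∈ U → fs x + B u ∈ D → ⟪y, fs x⟫ - φ y ≤ Ci u + ε (fs x + B u) := by
      intro y u hu hzD
      rw [hφ]
      have h1 : ⟪u, -(ContinuousLinearMap.adjoint B) y⟫ - Ci u ≤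
          conjOn U Ci (-(ContinuousLinearMap.adjoint B) y) := DCDPaux.le_conjOn (bddU _) hu
      have h2 : ⟪fs x + B u, y⟫ - ε (fs x + B u) ≤ conjOn D ε y :=
        DCDPaux.le_conjOn (bddD _) hzD
      have e1 : ⟪u, -(ContinuousLinearMap.adjoint B) y⟫ = -⟪B u, y⟫ := hadj y u
      have e2 : ⟪fs x + B u, y⟫ = ⟪fs x, y⟫ + ⟪B u, y⟫ := inner_add_left _ _ _
      have e3 : ⟪y, fs x⟫ = ⟪fs x, y⟫ := real_inner_comm _ _
      rw [e1] at h1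
      rw [e2] at h2
      rw [e3]
      linarith
    have hTbb : BddBelow Tset := by
      refine ⟨-φ 0, ?_⟩
      rintro c ⟨u, hu, hz, rfl⟩
      have h := wd 0 u hu hz
      rw [hε] at h
      simpa using h
    set Rng := Set.range (fun y : EuclideanSpace ℝ (Fin n) => ⟪y, fs x⟫ - φ y) with hRngdef
    have hRngbdd : BddAbove Rng := by
      refine ⟨Ci uf + ε (fs x + B uf), ?_⟩
      rintro r ⟨y, rfl⟩
      exact wd y uf huf hzf
    have hRngne : Rng.Nonempty := ⟨_, Set.mem_range_self 0⟩
    have ΦleT : sSup Rng ≤ sInf Tset := by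
      refine csSup_le hRngne ?_
      rintro r ⟨y, rfl⟩
      refine le_csInf hTne ?_
      rintro c ⟨u, hu, hz, rfl⟩
      have h := wd y u hu hz
      rw [hε] at h
      exact h
    have TleΦ : sInf Tset ≤ sSup Rng := by
      by_contra hlt
      push_neg at hlt
      set c := (sSup Rng + sInf Tset) / 2 with hcdef
      have hc1 : sSup Rng < c := by rw [hcdef]; linarith
      have hc2 : c < sInf Tset := by rw [hcdef]; linarith
      have hcfeas : ∀ u ∈ U, fs x + B u ∈ D → c < Ci u + ε (fs x + B u) := by
        intro u hu hz
        have : sInf Tset ≤ Ci u + ε (fs x + B u) := csInf_le hTbb (hTmem u hu hz)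
        linarith
      obtain ⟨y, hy⟩ := DCDPaux2.strong_dual U hUne hUc hUconv D hDne hDcomp hDconv
        Ci hCi hCiconv ε εconv εcont B (fs x) uf huf hzf c hcfeas
      have hφy : φ y ≤ ⟪y, fs x⟫ - c := by
        rw [hφ]
        have hDpart : ∀ u ∈ U, conjOn D ε y ≤ (⟪y, fs x⟫ - c) - (-⟪B u, y⟫ - Ci u) := by
          intro u hu
          refine DCDPaux.conjOn_le hDne (fun z hz => ?_)
          have := hy u hu z hz
          linarith
        have hUpart : conjOn U Ci (-(ContinuousLinearMap.adjoint B) y) ≤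
            (⟪y, fs x⟫ - c) - conjOn D ε y := by
          refine DCDPaux.conjOn_le hUne (fun u hu => ?_)
          have := hDpart u hu
          rw [hadj y u]
          linarith
        linarith
      have h5 : c ≤ ⟪y, fs x⟫ - φ y := by linarith
      have h6 : ⟪y, fs x⟫ - φ y ≤ sSup Rng := le_csSup hRngbdd ⟨y, rfl⟩
      linarith
    -- sup over Y, with exact φ and discrete ϕd
    set G := Y.sup' hYne (fun y => ⟪y, fs x⟫ - φ y) with hGdef
    set Gd := Y.sup' hYne (fun y => ⟪y, fs x⟫ - ϕd y) with hGddef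
    have hGdle : Gd ≤ G + (e_u + (e_x + γ * e_e)) := by
      refine Finset.sup'_le _ _ (fun y hy => ?_)
      have h1 := (hcomp y hy).1
      have h2 : ⟪y, fs x⟫ - φ y ≤ G := by
        rw [hGdef]; exact Finset.le_sup' (fun y => ⟪y, fs x⟫ - φ y) hy
      linarith
    have hGle : G ≤ Gd + (e_v + γ * e_e) := by
      refine Finset.sup'_le _ _ (fun y hy => ?_)
      have h1 := (hcomp y hy).2
      have h2 : ⟪y, fs x⟫ - ϕd y ≤ Gd := by
        rw [hGddef]; exact Finset.le_sup' (fun y => ⟪y, fs x⟫ - ϕd y) hy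
      linarith
    have hGleΦ : G ≤ sSup Rng := by
      refine Finset.sup'_le _ _ (fun y _ => ?_)
      exact le_csSup hRngbdd ⟨y, rfl⟩
    -- attainment and nearest grid point
    have hΦleG : sSup Rng ≤ G + e_y := by
      obtain ⟨yx, hyx1, hyx2⟩ := hatt x hx
      rw [← hRngdef] at hyx1
      obtain ⟨y', hy'c, hy'd⟩ :=
        (Y.finite_toSet.isCompact).exists_infDist_eq_dist ⟨y₀, Finset.mem_coe.mpr hy₀⟩ yx
      have hy'Y : y' ∈ Y := Finset.mem_coe.mp hy'c
      have hdd : dist yx y' ≤ δ := by rw [← hy'd]; exact hyx2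
      have hnd : ‖yx - y'‖ ≤ δ := by rw [← dist_eq_norm]; exact hdd
      have hphi : φ y' - φ yx ≤ M * ‖y' - yx‖ := (le_abs_self _).trans (φlip y' yx)
      have h4 : ‖y' - yx‖ = ‖yx - y'‖ := norm_sub_rev _ _
      have h1 : ⟪yx - y', fs x⟫ ≤ ‖yx - y'‖ * ‖fs x‖ := real_inner_le_norm _ _
      have hinner : ⟪yx, fs x⟫ = ⟪y', fs x⟫ + ⟪yx - y', fs x⟫ := by
        rw [← inner_add_left]
        congr 1
        abel
      have hGy : ⟪y', fs x⟫ - φ y' ≤ G := by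
        rw [hGdef]; exact Finset.le_sup' (fun y => ⟪y, fs x⟫ - φ y) hy'Y
      have hfsb : ‖fs x‖ ≤ NX := by
        rw [hNXdef]; exact Finset.le_sup' (fun x => ‖fs x‖) hx
      have b1 : ‖yx - y'‖ * ‖fs x‖ ≤ δ * NX :=
        mul_le_mul hnd hfsb (norm_nonneg _) hδ
      have b2 : M * ‖yx - y'‖ ≤ M * δ := mul_le_mul_of_nonneg_left hnd hMnn
      have hcoef : e_y = δ * NX + M * δ := by rw [hey]; ring
      rw [h4] at hphi
      rw [hyx1, hinner]
      linarith
    -- combine everything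
    obtain ⟨hE1, hE2⟩ := hE x hx
    rw [← hGddef] at hE1 hE2
    have hTeq : sSup Rng = sInf Tset := le_antisymm ΦleT TleΦ
    rw [abs_le]
    constructor
    · -- lower bound
      linarith
    · -- upper bound
      linarith
  refine ⟨main, ?_⟩
  intro Cs
  refine Finset.sup'_le _ _ (fun x hx => ?_)
  calc |(Cs x + Ehat x) -
        (Cs x + sInf {c : ℝ | ∃ u ∈ U, fs x + B u ∈ D ∧
          c = Ci u + γ * ∑ w ∈ W, p w * J (fs x + B u + w)})| =
      |Ehat x - sInf {c : ℝ | ∃ u ∈ U, fs x + B u ∈ D ∧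
          c = Ci u + γ * ∑ w ∈ W, p w * J (fs x + B u + w)}| := by
        rw [add_sub_add_left_eq_sub]
    _ ≤ γ * e_e + (e_u + e_v + e_x + e_y + e_z) := main x hx
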